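/- In type B_n (n ≥ 3), where the simple roots are α_i = −ω_{i−1} + 2ω_i − ω_{i+1} for 1 ≤ i ≤ n−2, α_{n−1} = −ω_{n−2} + 2ω_{n−1} − 2ω_n, and α_n = −ω_{n−1} + 2ω_n, the level sets satisfy: Λ₁ = {0, ω_n}, Λ₂ = {ω_1, ω_1 + ω_n}, and ω_2 is the unique radical weight lying in Λ₃. -/

import Mathlib

namespace WeightLevelsBn

/-- The simple roots of `B_n` written in the basis of fundamental dominant weights:
`α_i = -ω_{i-1} + 2ω_i - ω_{i+1}` for `i ≤ n-2`, `α_{n-1} = -ω_{n-2} + 2ω_{n-1} - 2ω_n`,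
and `α_n = -ω_{n-1} + 2ω_n`, with `0`-based indexing. -/
def alpha (n : ℕ) (i : Fin n) : Fin n → ℤ := fun j =>
  if j = i then 2
  else if (i : ℕ) = n - 2 then
    (if (j : ℕ) + 1 = (i : ℕ) then -1 else if (j : ℕ) = n - 1 then -2 else 0)
  else if (j : ℕ) + 1 = (i : ℕ) ∨ (i : ℕ) + 1 = (j : ℕ) then -1
  else 0

/-- A weight is dominant if all its coordinates (in the fundamental weight basis) are `≥ 0`. -/
def dominant (n : ℕ) (l : Fin n → ℤ) : Prop := ∀ i, 0 ≤ l i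

/-- `prec n μ λ` means `μ ≺ λ`: `μ ≠ λ` and `λ - μ` is an `ℕ`-linear combination of the
simple roots. -/
def prec (n : ℕ) (μ l : Fin n → ℤ) : Prop :=
  μ ≠ l ∧ ∃ c : Fin n → ℕ, l = μ + ∑ i, (c i : ℤ) • alpha n i

/-- A weight is radical if it is a `ℤ`-linear combination of the simple roots. -/
def radical (n : ℕ) (l : Fin n → ℤ) : Prop :=
  ∃ c : Fin n → ℤ, l = ∑ i, c i • alpha n i

/-- `cum n i` is the union `Λ₁ ∪ ⋯ ∪ Λ_i` of the first `i` level sets. -/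
def cum (n : ℕ) : ℕ → Set (Fin n → ℤ)
  | 0 => ∅
  | i + 1 => cum n i ∪
      {l | dominant n l ∧ l ∉ cum n i ∧ ∀ ν, dominant n ν → prec n ν l → ν ∈ cum n i}

/-- `level n i` is the set `Λ_i` of weights of level `i` (for `i ≥ 1`). -/
def level (n : ℕ) (i : ℕ) : Set (Fin n → ℤ) :=
  {l | dominant n l ∧ l ∉ cum n (i - 1) ∧ ∀ ν, dominant n ν → prec n ν l → ν ∈ cum n (i - 1)}

section Aux
variable {n : ℕ}

def F (n : ℕ) (c : Fin n → ℤ) : ℕ → ℤ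
  | 0 => 0
  | m + 1 => if h : m < n then c ⟨m, h⟩ else 0

lemma F_zero (c : Fin n → ℤ) : F n c 0 = 0 := rfl
lemma F_pos (c : Fin n → ℤ) (m : ℕ) (h : m < n) : F n c (m + 1) = c ⟨m, h⟩ := by
  simp [F, h]
lemma F_big (c : Fin n → ℤ) (m : ℕ) (h : ¬ m < n) : F n c (m + 1) = 0 := by
  simp [F, h]
lemma F_nonneg (c : Fin n → ℕ) (k : ℕ) : 0 ≤ F n (fun i => (c i : ℤ)) k := by
  cases k with
  | zero => simp [F]
  | succ m =>
    by_cases h : m < n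
    · rw [F_pos _ _ h]; positivity
    · rw [F_big _ _ h]

lemma smul_alpha_apply (hn : 3 ≤ n) (x : ℤ) (i j : Fin n) :
    x * alpha n i j =
      (if (i : ℕ) = (j : ℕ) then 2 * x else 0)
      + (if (i : ℕ) = (j : ℕ) + 1 then (-1) * x else 0)
      + (if (j : ℕ) ≠ 0 ∧ (j : ℕ) ≠ n - 1 then
          (if (i : ℕ) = (j : ℕ) - 1 then (-1) * x else 0) else 0)
      + (if (j : ℕ) = n - 1 then (if (i : ℕ) = n - 2 then (-2) * x else 0) else 0) := by
  rcases i with ⟨iv, hi⟩; rcases j with ⟨jv, hj⟩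
  simp only [alpha, Fin.mk.injEq, Fin.val_mk]
  split_ifs <;> omega

lemma sum_ite_F (c : Fin n → ℤ) (x : ℤ) (m : ℕ) :
    (∑ i : Fin n, if (i : ℕ) = m then x * c i else 0) = x * F n c (m + 1) := by
  by_cases h : m < n
  · rw [F_pos _ _ h]
    rw [Finset.sum_eq_single (⟨m, h⟩ : Fin n)]
    · simp
    · intro i _ hi
      rw [if_neg]
      intro him; exact hi (Fin.ext him)
    · simp
  · rw [F_big _ _ h, mul_zero]
    apply Finset.sum_eq_zero
    intro i _
    rw [if_neg]
    intro him; exact h (him ▸ i.isLt)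

lemma sum_smul_alpha_apply (hn : 3 ≤ n) (c : Fin n → ℤ) (j : Fin n) :
    (∑ i, c i • alpha n i) j =
      if (j : ℕ) = n - 1 then 2 * F n c n - 2 * F n c (n - 1)
      else 2 * F n c ((j : ℕ) + 1) - F n c (j : ℕ) - F n c ((j : ℕ) + 2) := by
  have h0 : (∑ i, c i • alpha n i) j = ∑ i, c i * alpha n i j := by
    rw [Finset.sum_apply]
    simp [Pi.smul_apply, smul_eq_mul]
  rw [h0, Finset.sum_congr rfl (fun i _ => smul_alpha_apply hn (c i) i j),
    Finset.sum_add_distrib, Finset.sum_add_distrib, Finset.sum_add_distrib,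
    sum_ite_F c 2 (j : ℕ), sum_ite_F c (-1) ((j : ℕ) + 1)]
  have S3 : (∑ x : Fin n, if (j : ℕ) ≠ 0 ∧ (j : ℕ) ≠ n - 1 then
        (if (x : ℕ) = (j : ℕ) - 1 then (-1) * c x else 0) else 0)
      = if (j : ℕ) ≠ 0 ∧ (j : ℕ) ≠ n - 1 then (-1) * F n c ((j : ℕ) - 1 + 1) else 0 := by
    split_ifs with h
    · exact sum_ite_F c (-1) _
    · exact Finset.sum_const_zero
  have S4 : (∑ x : Fin n, if (j : ℕ) = n - 1 then
        (if (x : ℕ) = n - 2 then (-2) * c x else 0) else 0)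
      = if (j : ℕ) = n - 1 then (-2) * F n c (n - 2 + 1) else 0 := by
    split_ifs with h
    · exact sum_ite_F c (-2) _
    · exact Finset.sum_const_zero
  rw [S3, S4]
  by_cases hj0 : (j : ℕ) = n - 1
  · rw [if_pos hj0, if_pos hj0, if_neg (by omega)]
    have e1 : (j : ℕ) + 1 = n := by have := j.isLt; omega
    rw [e1, show n - 2 + 1 = n - 1 by omega, F_big c n (by omega)]
    ring
  · rw [if_neg hj0, if_neg hj0]
    by_cases hj1 : (j : ℕ) = 0
    · rw [if_neg (by omega)]
      rw [show ((j : ℕ) + 1 + 1) = (j : ℕ) + 2 by omega, hj1, show F n c 0 = 0 from rfl]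
      ring
    · rw [if_pos ⟨hj1, hj0⟩, show (j : ℕ) - 1 + 1 = (j : ℕ) by omega,
        show ((j : ℕ) + 1 + 1) = (j : ℕ) + 2 by omega]
      ring


lemma diff_mono (f : ℕ → ℤ) (a b : ℕ)
    (hconv : ∀ j, a + 1 ≤ j → j ≤ b → 2 * f j ≤ f (j - 1) + f (j + 1)) :
    ∀ k j, a ≤ j → j ≤ k → k ≤ b → f (j + 1) - f j ≤ f (k + 1) - f k := by
  intro k
  induction k with
  | zero => intro j _ hj _; have : j = 0 := by omega
            subst this; omega
  | succ k ih =>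
    intro j haj hjk hkb
    rcases Nat.eq_or_lt_of_le hjk with h | h
    · subst h; omega
    · have h1 : 2 * f (k + 1) ≤ f (k + 1 - 1) + f (k + 1 + 1) := hconv (k + 1) (by omega) hkb
      have h2 : f (j + 1) - f j ≤ f (k + 1) - f k := ih j haj (by omega) (by omega)
      have e : k + 1 - 1 = k := by omega
      rw [e] at h1
      omega

lemma all_zero (hn : 3 ≤ n) (f : ℕ → ℤ) (hf0 : f 0 = 0) (hpos : ∀ k, 0 ≤ f k)
    (hconv : ∀ j, 1 ≤ j → j ≤ n - 1 → 2 * f j ≤ f (j - 1) + f (j + 1))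
    (hlast : 2 * f n ≤ 2 * f (n - 1) + 1) :
    ∀ k, k ≤ n → f k = 0 := by
  have hmono := diff_mono f 0 (n - 1) (fun j h1 h2 => hconv j h1 h2)
  have hn1 : n - 1 + 1 = n := by omega
  have hdec : ∀ j, j ≤ n - 1 → f (j + 1) ≤ f j := by
    intro j hj
    have := hmono (n - 1) j (Nat.zero_le _) hj (le_refl _)
    rw [hn1] at this
    omega
  have hle : ∀ k, k ≤ n → f k ≤ 0 := by
    intro k
    induction k with
    | zero => intro _; omega
    | succ k ih =>
      intro h
      have := hdec k (by omega)
      have := ih (by omega)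
      omega
  intro k hk
  have := hpos k
  have := hle k hk
  omega

lemma find_drop (f : ℕ → ℤ) (hpos : ∀ k, 0 ≤ f k) :
    ∀ N, 1 ≤ f 1 → f (N + 1) ≤ 0 → ∃ m, 1 ≤ m ∧ m ≤ N ∧ 1 ≤ f m ∧ f (m + 1) ≤ 0 := by
  intro N
  induction N with
  | zero => intro h1 h0; norm_num at h0; omega
  | succ N ih =>
    intro h1 h0
    by_cases h : f (N + 1) ≤ 0
    · obtain ⟨m, hm⟩ := ih h1 h
      exact ⟨m, hm.1, by omega, hm.2.2⟩
    · exact ⟨N + 1, by omega, le_refl _, by omega, h0⟩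

lemma L1 (hn : 3 ≤ n) (f : ℕ → ℤ) (hf0 : f 0 = 0) (hpos : ∀ k, 0 ≤ f k)
    (h1 : 2 * f 1 ≤ f 0 + f 2 + 1)
    (hconv : ∀ j, 2 ≤ j → j ≤ n - 1 → 2 * f j ≤ f (j - 1) + f (j + 1))
    (hlast : 2 * f n ≤ 2 * f (n - 1) + 1) :
    (∀ k, k ≤ n → f k = 0) ∨ (∀ k, 1 ≤ k → k ≤ n → f k = 1) := by
  have hmono := diff_mono f 1 (n - 1) (fun j hj1 hj2 => hconv j hj1 hj2)
  have hn1 : n - 1 + 1 = n := by omega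
  have hdec : ∀ j, 1 ≤ j → j ≤ n - 1 → f (j + 1) ≤ f j := by
    intro j hj1 hj2
    have := hmono (n - 1) j hj1 hj2 (le_refl _)
    rw [hn1] at this
    omega
  have hf1 : f 1 ≤ 1 := by
    have := hdec 1 (le_refl _) (by omega)
    norm_num at this
    omega
  have hle : ∀ k j, 1 ≤ j → j ≤ k → k ≤ n → f k ≤ f j := by
    intro k
    induction k with
    | zero => intro j h1 h2 _; omega
    | succ k ih =>
      intro j hj1 hjk hkn
      rcases Nat.eq_or_lt_of_le hjk with h | h
      · rw [h]
      · have := ih j hj1 (by omega) (by omega)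
        have := hdec k (by omega) (by omega)
        omega
  by_cases hfn : f n ≤ 0
  · left
    by_cases hf1z : f 1 ≤ 0
    · intro k hk
      rcases Nat.eq_zero_or_pos k with rfl | hk1
      · exact hf0
      · have := hle k 1 (le_refl _) hk1 hk
        have := hpos k
        omega
    · exfalso
      have hfn' : f (n - 1 + 1) ≤ 0 := by rw [hn1]; exact hfn
      obtain ⟨m, hm1, hmn, hfm, hfm1⟩ := find_drop f hpos (n - 1) (by omega) hfn'
      rcases Nat.eq_or_lt_of_le hm1 with h | h
      · have e2 : f 2 = f (m + 1) := by rw [← h]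
        omega
      · have hc := hconv m (by omega) (by omega)
        have h3 : f (m - 1) ≤ f 1 := hle (m - 1) 1 (le_refl _) (by omega) (by omega)
        omega
  · right
    intro k h1k hkn
    have ha := hle n k h1k hkn (le_refl _)
    have hb := hle k 1 (le_refl _) h1k hkn
    omega

lemma L2 (hn : 3 ≤ n) (f : ℕ → ℤ) (hf0 : f 0 = 0) (hpos : ∀ k, 0 ≤ f k)
    (h1 : 2 * f 1 ≤ f 0 + f 2)
    (h2 : 2 * f 2 ≤ f 1 + f 3 + 1)
    (hconv : ∀ j, 3 ≤ j → j ≤ n - 1 → 2 * f j ≤ f (j - 1) + f (j + 1))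
    (hlast : 2 * f n ≤ 2 * f (n - 1)) :
    (∀ k, k ≤ n → f k = 0)
    ∨ (f 1 = 0 ∧ ∀ k, 2 ≤ k → k ≤ n → f k = 1)
    ∨ (f 1 = 1 ∧ ∀ k, 2 ≤ k → k ≤ n → f k = 2) := by
  have hmono := diff_mono f 2 (n - 1) (fun j hj1 hj2 => hconv j hj1 hj2)
  have hn1 : n - 1 + 1 = n := by omega
  have hdec : ∀ j, 2 ≤ j → j ≤ n - 1 → f (j + 1) ≤ f j := by
    intro j hj1 hj2
    have := hmono (n - 1) j hj1 hj2 (le_refl _)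
    rw [hn1] at this
    omega
  have hf32 : f 3 ≤ f 2 := hdec 2 (le_refl _) (by omega)
  by_cases hd : f 2 ≤ f 1
  · left
    have hf1 : f 1 = 0 := by have := hpos 1; omega
    have hf2 : f 2 = 0 := by have := hpos 2; omega
    have hle2 : ∀ k, 2 ≤ k → k ≤ n → f k ≤ f 2 := by
      intro k
      induction k with
      | zero => intro h _; omega
      | succ k ih =>
        intro h2k hkn
        rcases Nat.eq_or_lt_of_le h2k with h | h
        · rw [← h]
        · have := ih (by omega) (by omega)
          have := hdec k (by omega) (by omega)
          omega
    intro k hk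
    match k, hk with
    | 0, _ => exact hf0
    | 1, _ => exact hf1
    | (m+2), hk =>
      have := hle2 (m + 2) (by omega) hk
      have := hpos (m + 2)
      omega
  · have hg2 : 0 ≤ f 3 - f 2 := by omega
    have hgall : ∀ j, 2 ≤ j → j ≤ n - 1 → f (j + 1) = f j := by
      intro j hj2 hjn
      have ha := hmono j 2 (le_refl _) hj2 hjn
      norm_num at ha
      have hb := hmono (n - 1) j hj2 hjn (le_refl _)
      rw [hn1] at hb
      omega
    have hconst : ∀ k, 2 ≤ k → k ≤ n → f k = f 2 := by
      intro k
      induction k with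
      | zero => intro h _; omega
      | succ k ih =>
        intro h2k hkn
        rcases Nat.eq_or_lt_of_le h2k with h | h
        · rw [← h]
        · have := ih (by omega) (by omega)
          have := hgall k (by omega) (by omega)
          omega
    have hf3 : f 3 = f 2 := hconst 3 (by omega) (by omega)
    have hf2e : f 2 = f 1 + 1 := by omega
    have hf11 : f 1 ≤ 1 := by omega
    have hp1 := hpos 1
    by_cases hf10 : f 1 = 0
    · right; left
      exact ⟨hf10, fun k h2k hkn => by rw [hconst k h2k hkn]; omega⟩
    · right; right
      have : f 1 = 1 := by omega
      exact ⟨this, fun k h2k hkn => by rw [hconst k h2k hkn]; omega⟩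


lemma sum_eq_of_F (hn : 3 ≤ n) (c : Fin n → ℤ) (φ : ℕ → ℤ) (hφ : ∀ k, F n c k = φ k)
    (j : Fin n) :
    (∑ i, c i • alpha n i) j =
      if (j : ℕ) = n - 1 then 2 * φ n - 2 * φ (n - 1)
      else 2 * φ ((j : ℕ) + 1) - φ (j : ℕ) - φ ((j : ℕ) + 2) := by
  rw [sum_smul_alpha_apply hn]
  simp only [hφ]

lemma sumE1 (hn : 3 ≤ n) (c : Fin n → ℤ) (hc : ∀ i, c i = 1) (j : Fin n) :
    (∑ i, c i • alpha n i) j = if (j : ℕ) = 0 then 1 else 0 := by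
  have hφ : ∀ k, F n c k = if 1 ≤ k ∧ k ≤ n then 1 else 0 := by
    intro k
    cases k with
    | zero => rw [F_zero, if_neg (by omega)]
    | succ m =>
      by_cases h : m < n
      · rw [F_pos c m h, hc, if_pos ⟨by omega, by omega⟩]
      · rw [F_big c m h, if_neg (by omega)]
  rw [sum_eq_of_F hn c _ hφ]
  have hj := j.isLt
  split_ifs <;> omega

lemma sumE2 (hn : 3 ≤ n) (c : Fin n → ℤ) (hc : ∀ i, c i = if (i : ℕ) = 0 then 0 else 1)
    (j : Fin n) :
    (∑ i, c i • alpha n i) j =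
      (if (j : ℕ) = 1 then 1 else 0) - (if (j : ℕ) = 0 then 1 else 0) := by
  have hφ : ∀ k, F n c k = if 2 ≤ k ∧ k ≤ n then 1 else 0 := by
    intro k
    cases k with
    | zero => rw [F_zero, if_neg (by omega)]
    | succ m =>
      by_cases h : m < n
      · rw [F_pos c m h, hc]
        simp only [Fin.val_mk]
        split_ifs <;> omega
      · rw [F_big c m h, if_neg (by omega)]
  rw [sum_eq_of_F hn c _ hφ]
  have hj := j.isLt
  split_ifs <;> omega

lemma sumE3 (hn : 3 ≤ n) (c : Fin n → ℤ) (hc : ∀ i, c i = if (i : ℕ) = 0 then 1 else 2)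
    (j : Fin n) :
    (∑ i, c i • alpha n i) j = if (j : ℕ) = 1 then 1 else 0 := by
  have hφ : ∀ k, F n c k = if k = 1 then 1 else if 2 ≤ k ∧ k ≤ n then 2 else 0 := by
    intro k
    cases k with
    | zero => rw [F_zero]; norm_num
    | succ m =>
      by_cases h : m < n
      · rw [F_pos c m h, hc]
        simp only [Fin.val_mk]
        split_ifs <;> omega
      · rw [F_big c m h]
        rw [if_neg (by omega), if_neg (by omega)]
  rw [sum_eq_of_F hn c _ hφ]
  have hj := j.isLt
  split_ifs <;> omega

lemma sumE4 (hn : 3 ≤ n) (p : ℕ) (hp : p ≤ n - 2) (c : Fin n → ℤ)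
    (hc : ∀ i, c i = if p ≤ (i : ℕ) then 1 else 0) (j : Fin n) :
    (∑ i, c i • alpha n i) j =
      (if (j : ℕ) = p then 1 else 0) - (if (j : ℕ) + 1 = p then 1 else 0) := by
  have hφ : ∀ k, F n c k = if p + 1 ≤ k ∧ k ≤ n then 1 else 0 := by
    intro k
    cases k with
    | zero => rw [F_zero, if_neg (by omega)]
    | succ m =>
      by_cases h : m < n
      · rw [F_pos c m h, hc]
        simp only [Fin.val_mk]
        split_ifs <;> omega
      · rw [F_big c m h, if_neg (by omega)]
  rw [sum_eq_of_F hn c _ hφ]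
  have hj := j.isLt
  split_ifs <;> omega

lemma sumE5 (hn : 3 ≤ n) (c : Fin n → ℤ) (hc : ∀ i, c i = if (i : ℕ) = n - 1 then 1 else 0)
    (j : Fin n) :
    (∑ i, c i • alpha n i) j =
      (if (j : ℕ) = n - 1 then 2 else 0) + (if (j : ℕ) = n - 2 then -1 else 0) := by
  have hφ : ∀ k, F n c k = if k = n then 1 else 0 := by
    intro k
    cases k with
    | zero => rw [F_zero, if_neg (by omega)]
    | succ m =>
      by_cases h : m < n
      · rw [F_pos c m h, hc]
        simp only [Fin.val_mk]
        split_ifs <;> omega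
      · rw [F_big c m h, if_neg (by omega)]
  rw [sum_eq_of_F hn c _ hφ]
  have hj := j.isLt
  split_ifs <;> omega

lemma sumE6 (hn : 3 ≤ n) (c : Fin n → ℤ) (hc : ∀ i, c i = if (i : ℕ) = 0 then 1 else 0)
    (j : Fin n) :
    (∑ i, c i • alpha n i) j =
      (if (j : ℕ) = 0 then 2 else 0) + (if (j : ℕ) = 1 then -1 else 0) := by
  have hφ : ∀ k, F n c k = if k = 1 then 1 else 0 := by
    intro k
    cases k with
    | zero => rw [F_zero, if_neg (by omega)]
    | succ m =>
      by_cases h : m < n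
      · rw [F_pos c m h, hc]
        simp only [Fin.val_mk]
        split_ifs <;> omega
      · rw [F_big c m h, if_neg (by omega)]
  rw [sum_eq_of_F hn c _ hφ]
  have hj := j.isLt
  split_ifs <;> omega

lemma coord_mid (hn : 3 ≤ n) (c ν l : Fin n → ℤ)
    (heq : l = ν + ∑ i, c i • alpha n i) (hν : ∀ i, 0 ≤ ν i)
    (t : ℕ) (ht : t ≤ n - 2) :
    2 * F n c (t + 1) - F n c t - F n c (t + 2) ≤ l ⟨t, by omega⟩ := by
  have h := congrFun heq ⟨t, by omega⟩
  have hd := hν ⟨t, by omega⟩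
  rw [Pi.add_apply, sum_smul_alpha_apply hn] at h
  simp only [Fin.val_mk] at h
  rw [if_neg (by omega)] at h
  omega

lemma coord_last (hn : 3 ≤ n) (c ν l : Fin n → ℤ)
    (heq : l = ν + ∑ i, c i • alpha n i) (hν : ∀ i, 0 ≤ ν i) :
    2 * F n c n - 2 * F n c (n - 1) ≤ l ⟨n - 1, (Nat.sub_lt (Nat.lt_of_lt_of_le (by norm_num) hn) Nat.one_pos)⟩ := by
  have h := congrFun heq ⟨n - 1, by omega⟩
  have hd := hν ⟨n - 1, by omega⟩
  rw [Pi.add_apply, sum_smul_alpha_apply hn] at h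
  simp only [Fin.val_mk] at h
  simp only [if_true] at h
  omega


lemma single_coord (t : ℕ) (h : t < n) (j : Fin n) :
    (Pi.single (⟨t, h⟩ : Fin n) (1 : ℤ) : Fin n → ℤ) j = if (j : ℕ) = t then 1 else 0 := by
  rw [Pi.single_apply (⟨t, h⟩ : Fin n) (1 : ℤ) j]
  simp [Fin.ext_iff]

lemma single_coord' (a j : Fin n) :
    (Pi.single a (1 : ℤ) : Fin n → ℤ) j = if (j : ℕ) = (a : ℕ) then 1 else 0 := by
  rw [Pi.single_apply a (1 : ℤ) j]
  simp [Fin.ext_iff]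

lemma move_mid (hn : 3 ≤ n) (t : ℕ) (ht : t ≤ n - 2) (l : Fin n → ℤ) :
    prec n (fun j => l j -
      ((if (j : ℕ) = t then 1 else 0) - (if (j : ℕ) + 1 = t then 1 else 0))) l := by
  constructor
  · intro hcontra
    have h := congrFun hcontra ⟨t, by omega⟩
    simp only [Fin.val_mk] at h
    split_ifs at h <;> omega
  · refine ⟨fun i => if t ≤ (i : ℕ) then 1 else 0, ?_⟩
    funext j
    rw [Pi.add_apply]
    have hs := sumE4 hn t ht (fun i => (((if t ≤ (i : ℕ) then 1 else 0 : ℕ)) : ℤ))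
      (fun i => by simp only [Nat.cast_ite, Nat.cast_one, Nat.cast_zero]) j
    rw [hs]
    ring

lemma move_last (hn : 3 ≤ n) (l : Fin n → ℤ) :
    prec n (fun j => l j -
      ((if (j : ℕ) = n - 1 then 2 else 0) + (if (j : ℕ) = n - 2 then -1 else 0))) l := by
  constructor
  · intro hcontra
    have h := congrFun hcontra ⟨n - 1, by omega⟩
    simp only [Fin.val_mk] at h
    split_ifs at h <;> omega
  · refine ⟨fun i => if (i : ℕ) = n - 1 then 1 else 0, ?_⟩
    funext j
    rw [Pi.add_apply]
    have hs := sumE5 hn (fun i => (((if (i : ℕ) = n - 1 then 1 else 0 : ℕ)) : ℤ))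
      (fun i => by simp only [Nat.cast_ite, Nat.cast_one, Nat.cast_zero]) j
    rw [hs]
    ring

lemma move_alpha0 (hn : 3 ≤ n) (l : Fin n → ℤ) :
    prec n (fun j => l j -
      ((if (j : ℕ) = 0 then 2 else 0) + (if (j : ℕ) = 1 then -1 else 0))) l := by
  constructor
  · intro hcontra
    have h := congrFun hcontra ⟨0, by omega⟩
    simp only [Fin.val_mk] at h
    split_ifs at h <;> omega
  · refine ⟨fun i => if (i : ℕ) = 0 then 1 else 0, ?_⟩
    funext j
    rw [Pi.add_apply]
    have hs := sumE6 hn (fun i => (((if (i : ℕ) = 0 then 1 else 0 : ℕ)) : ℤ))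
      (fun i => by simp only [Nat.cast_ite, Nat.cast_one, Nat.cast_zero]) j
    rw [hs]
    ring

lemma dom_move_mid (hn : 3 ≤ n) (t : ℕ) (ht : t ≤ n - 2) (l : Fin n → ℤ)
    (hdom : dominant n l) (hl : ∀ j : Fin n, (j : ℕ) = t → 1 ≤ l j) :
    dominant n (fun j => l j -
      ((if (j : ℕ) = t then 1 else 0) - (if (j : ℕ) + 1 = t then 1 else 0))) := by
  intro j
  show 0 ≤ l j - ((if (j : ℕ) = t then 1 else 0) - (if (j : ℕ) + 1 = t then 1 else 0))
  have hd := hdom j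
  by_cases hjt : (j : ℕ) = t
  · rw [if_pos hjt, if_neg (by omega)]
    have := hl j hjt
    omega
  · rw [if_neg hjt]
    split_ifs <;> omega

lemma dom_move_last (hn : 3 ≤ n) (l : Fin n → ℤ)
    (hdom : dominant n l) (hl : ∀ j : Fin n, (j : ℕ) = n - 1 → 2 ≤ l j) :
    dominant n (fun j => l j -
      ((if (j : ℕ) = n - 1 then 2 else 0) + (if (j : ℕ) = n - 2 then -1 else 0))) := by
  intro j
  show 0 ≤ l j - ((if (j : ℕ) = n - 1 then 2 else 0) + (if (j : ℕ) = n - 2 then -1 else 0))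
  have hd := hdom j
  by_cases hjt : (j : ℕ) = n - 1
  · rw [if_pos hjt, if_neg (by omega)]
    have := hl j hjt
    omega
  · rw [if_neg hjt]
    split_ifs <;> omega

lemma dom_move_alpha0 (hn : 3 ≤ n) (l : Fin n → ℤ)
    (hdom : dominant n l) (hl : ∀ j : Fin n, (j : ℕ) = 0 → 2 ≤ l j) :
    dominant n (fun j => l j -
      ((if (j : ℕ) = 0 then 2 else 0) + (if (j : ℕ) = 1 then -1 else 0))) := by
  intro j
  show 0 ≤ l j - ((if (j : ℕ) = 0 then 2 else 0) + (if (j : ℕ) = 1 then -1 else 0))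
  have hd := hdom j
  by_cases hjt : (j : ℕ) = 0
  · rw [if_pos hjt, if_neg (by omega)]
    have := hl j hjt
    omega
  · rw [if_neg hjt]
    split_ifs <;> omega

lemma cum_one : cum n 1 = level n 1 := by
  show cum n 0 ∪ _ = _
  rw [show cum n 0 = ∅ from rfl, Set.empty_union]
  rfl

lemma cum_two : cum n 2 = cum n 1 ∪ level n 2 := rfl

lemma F_fin (c : Fin n → ℤ) (i : Fin n) : F n c ((i : ℕ) + 1) = c i := by
  rw [F_pos c (i : ℕ) i.isLt]


lemma ineq_mid (hn : 3 ≤ n) (c ν l : Fin n → ℤ)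
    (heq : l = ν + ∑ i, c i • alpha n i) (hν : dominant n ν)
    (t : ℕ) (ht : t ≤ n - 2) (b : ℤ) (hl : ∀ j : Fin n, (j : ℕ) = t → l j ≤ b) :
    2 * F n c (t + 1) - F n c t - F n c (t + 2) ≤ b := by
  set jf : Fin n := (⟨t, by omega⟩ : Fin n) with hjf
  have hval : (jf : ℕ) = t := by rw [hjf]
  have h := congrFun heq jf
  have hd := hν jf
  have hb := hl jf hval
  rw [Pi.add_apply, sum_smul_alpha_apply hn, hval] at h
  rw [if_neg (by omega)] at h
  omega

lemma ineq_last (hn : 3 ≤ n) (c ν l : Fin n → ℤ)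
    (heq : l = ν + ∑ i, c i • alpha n i) (hν : dominant n ν)
    (b : ℤ) (hl : ∀ j : Fin n, (j : ℕ) = n - 1 → l j ≤ b) :
    2 * F n c n - 2 * F n c (n - 1) ≤ b := by
  set jf : Fin n := (⟨n - 1, by omega⟩ : Fin n) with hjf
  have hval : (jf : ℕ) = n - 1 := by rw [hjf]
  have h := congrFun heq jf
  have hd := hν jf
  have hb := hl jf hval
  rw [Pi.add_apply, sum_smul_alpha_apply hn, hval] at h
  rw [if_pos rfl] at h
  omega

lemma no_lower (hn : 3 ≤ n) (l : Fin n → ℤ)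
    (hmid : ∀ j : Fin n, (j : ℕ) ≤ n - 2 → l j ≤ 0)
    (hlast : ∀ j : Fin n, (j : ℕ) = n - 1 → l j ≤ 1)
    (ν : Fin n → ℤ) (hν : dominant n ν) (hp : prec n ν l) : False := by
  obtain ⟨hne, c, heq⟩ := hp
  have hconv : ∀ j, 1 ≤ j → j ≤ n - 1 →
      2 * F n (fun i => (c i : ℤ)) j ≤
        F n (fun i => (c i : ℤ)) (j - 1) + F n (fun i => (c i : ℤ)) (j + 1) := by
    intro j hj1 hj2
    have h := ineq_mid hn (fun i => (c i : ℤ)) ν l heq hν (j - 1) (by omega) 0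
      (fun jf hjf => hmid jf (by omega))
    rw [show j - 1 + 1 = j by omega, show j - 1 + 2 = j + 1 by omega] at h
    omega
  have hla : 2 * F n (fun i => (c i : ℤ)) n ≤ 2 * F n (fun i => (c i : ℤ)) (n - 1) + 1 := by
    have h := ineq_last hn (fun i => (c i : ℤ)) ν l heq hν 1 hlast
    omega
  have hz := all_zero hn (F n (fun i => (c i : ℤ))) rfl (F_nonneg c) hconv hla
  apply hne
  have hc0 : ∀ i : Fin n, c i = 0 := by
    intro i
    have h := hz ((i : ℕ) + 1) (by have := i.isLt; omega)
    rw [F_fin] at h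
    exact_mod_cast h
  have hS : (∑ i, ((c i : ℤ)) • alpha n i) = 0 := by
    apply Finset.sum_eq_zero
    intro i _
    rw [hc0 i]
    simp
  rw [heq, hS, add_zero]

lemma part1 (hn : 3 ≤ n) :
    level n 1 = {0, (Pi.single (⟨n - 1, (Nat.sub_lt (Nat.lt_of_lt_of_le (by norm_num) hn) Nat.one_pos)⟩ : Fin n) (1 : ℤ) : Fin n → ℤ)} := by
  ext l
  simp only [level, Set.mem_setOf_eq, Set.mem_insert_iff, Set.mem_singleton_iff]
  constructor
  · rintro ⟨hdom, -, hmin⟩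
    have hmin' : ∀ ν, dominant n ν → prec n ν l → False := by
      intro ν h1 h2
      have h3 := hmin ν h1 h2
      simpa [cum] using h3
    set jn : Fin n := (⟨n - 1, by omega⟩ : Fin n) with hjn
    have hjnval : (jn : ℕ) = n - 1 := by rw [hjn]
    have hz : ∀ j : Fin n, (j : ℕ) ≤ n - 2 → l j = 0 := by
      intro j hj
      by_contra hne
      have h1 : 1 ≤ l j := by have := hdom j; omega
      exact hmin' _ (dom_move_mid hn (j : ℕ) hj l hdom
        (fun j' hj' => by rw [show j' = j from Fin.ext hj']; exact h1)) (move_mid hn (j : ℕ) hj l)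
    have hle1 : l jn ≤ 1 := by
      by_contra hgt
      exact hmin' _ (dom_move_last hn l hdom
        (fun j' hj' => by rw [show j' = jn from Fin.ext (by omega)]; omega)) (move_last hn l)
    have hchar : ∀ j : Fin n, l j = if (j : ℕ) = n - 1 then l jn else 0 := by
      intro j
      by_cases hj : (j : ℕ) = n - 1
      · rw [if_pos hj]
        have hej : j = jn := Fin.ext (by omega)
        rw [hej]
      · rw [if_neg hj]
        exact hz j (by have := j.isLt; omega)
    by_cases h0 : l jn = 0
    · left
      funext j
      show l j = 0
      rw [hchar j, h0]
      split_ifs <;> rfl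
    · right
      have h1 : l jn = 1 := by have := hdom jn; omega
      funext j
      rw [single_coord, hchar j, h1]
  · have hd : dominant n (Pi.single (⟨n - 1, by omega⟩ : Fin n) (1 : ℤ) : Fin n → ℤ) := by
      intro i
      rw [single_coord]
      split_ifs <;> omega
    rintro (rfl | rfl)
    · refine ⟨fun i => le_refl 0, Set.notMem_empty _, ?_⟩
      intro ν hν hp
      exact ((no_lower hn 0 (fun j _ => le_refl 0) (fun j _ => by norm_num) ν hν hp)).elim
    · refine ⟨hd, Set.notMem_empty _, ?_⟩
      intro ν hν hp
      refine ((no_lower hn _ ?_ ?_ ν hν hp)).elim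
      · intro j hj
        rw [single_coord]
        have := j.isLt
        rw [if_neg (by omega)]
      · intro j hj
        rw [single_coord]
        split_ifs <;> omega


lemma nu_eq_l (ν l : Fin n → ℤ) (c : Fin n → ℕ)
    (heq : l = ν + ∑ i, (c i : ℤ) • alpha n i)
    (hz : ∀ k, k ≤ n → F n (fun i => (c i : ℤ)) k = 0) : ν = l := by
  have hc0 : ∀ i : Fin n, c i = 0 := by
    intro i
    have h := hz ((i : ℕ) + 1) (by have := i.isLt; omega)
    rw [F_fin] at h
    exact_mod_cast h
  have hS : (∑ i, ((c i : ℤ)) • alpha n i) = 0 := by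
    apply Finset.sum_eq_zero
    intro i _
    rw [hc0 i]
    simp
  rw [heq, hS, add_zero]

lemma lower_e (hn : 3 ≤ n) (l : Fin n → ℤ)
    (h0 : ∀ j : Fin n, (j : ℕ) = 0 → l j ≤ 1)
    (hmid : ∀ j : Fin n, 1 ≤ (j : ℕ) → (j : ℕ) ≤ n - 2 → l j ≤ 0)
    (hlast : ∀ j : Fin n, (j : ℕ) = n - 1 → l j ≤ 1)
    (ν : Fin n → ℤ) (hν : dominant n ν) (hp : prec n ν l) :
    ν = fun j => l j - (if (j : ℕ) = 0 then 1 else 0) := by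
  obtain ⟨hne, c, heq⟩ := hp
  have h1 : 2 * F n (fun i => (c i : ℤ)) 1 ≤
      F n (fun i => (c i : ℤ)) 0 + F n (fun i => (c i : ℤ)) 2 + 1 := by
    have h := ineq_mid hn (fun i => (c i : ℤ)) ν l heq hν 0 (by omega) 1 h0
    rw [show (0 : ℕ) + 1 = 1 from rfl, show (0 : ℕ) + 2 = 2 from rfl] at h
    omega
  have hconv : ∀ j, 2 ≤ j → j ≤ n - 1 →
      2 * F n (fun i => (c i : ℤ)) j ≤
        F n (fun i => (c i : ℤ)) (j - 1) + F n (fun i => (c i : ℤ)) (j + 1) := by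
    intro j hj1 hj2
    have h := ineq_mid hn (fun i => (c i : ℤ)) ν l heq hν (j - 1) (by omega) 0
      (fun jf hjf => hmid jf (by omega) (by omega))
    rw [show j - 1 + 1 = j by omega, show j - 1 + 2 = j + 1 by omega] at h
    omega
  have hla : 2 * F n (fun i => (c i : ℤ)) n ≤ 2 * F n (fun i => (c i : ℤ)) (n - 1) + 1 := by
    have h := ineq_last hn (fun i => (c i : ℤ)) ν l heq hν 1 hlast
    omega
  rcases L1 hn (F n (fun i => (c i : ℤ))) rfl (F_nonneg c) h1 hconv hla with hz | ho
  · exact absurd (nu_eq_l ν l c heq hz) hne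
  · have hc1 : ∀ i : Fin n, (c i : ℤ) = 1 := by
      intro i
      have h := ho ((i : ℕ) + 1) (by omega) (by have := i.isLt; omega)
      rw [F_fin] at h
      exact h
    funext j
    show ν j = l j - (if (j : ℕ) = 0 then 1 else 0)
    have h := congrFun heq j
    rw [Pi.add_apply, sumE1 hn _ hc1 j] at h
    split_ifs at h ⊢ <;> omega

lemma part2 (hn : 3 ≤ n) :
    level n 2 = {(Pi.single (⟨0, (Nat.lt_of_lt_of_le (by norm_num) hn)⟩ : Fin n) (1 : ℤ) : Fin n → ℤ),
      (Pi.single (⟨0, (Nat.lt_of_lt_of_le (by norm_num) hn)⟩ : Fin n) (1 : ℤ) : Fin n → ℤ) +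
        Pi.single (⟨n - 1, (Nat.sub_lt (Nat.lt_of_lt_of_le (by norm_num) hn) Nat.one_pos)⟩ : Fin n) (1 : ℤ)} := by
  have hcum1 : cum n 1 =
      {0, (Pi.single (⟨n - 1, by omega⟩ : Fin n) (1 : ℤ) : Fin n → ℤ)} :=
    cum_one.trans (part1 hn)
  ext l
  simp only [level, Set.mem_setOf_eq, Set.mem_insert_iff, Set.mem_singleton_iff]
  rw [show (2 : ℕ) - 1 = 1 from rfl, hcum1]
  constructor
  · rintro ⟨hdom, hnotc, hmin⟩
    simp only [Set.mem_insert_iff, Set.mem_singleton_iff] at hnotc hmin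
    set j0 : Fin n := (⟨0, by omega⟩ : Fin n) with hj0
    have hj0val : (j0 : ℕ) = 0 := by rw [hj0]
    set jn : Fin n := (⟨n - 1, by omega⟩ : Fin n) with hjn
    have hjnval : (jn : ℕ) = n - 1 := by rw [hjn]
    have hz : ∀ j : Fin n, 1 ≤ (j : ℕ) → (j : ℕ) ≤ n - 2 → l j = 0 := by
      intro j hj1 hj2
      by_contra hne
      have h1 : 1 ≤ l j := by have := hdom j; omega
      have hν := hmin _ (dom_move_mid hn (j : ℕ) hj2 l hdom
          (fun j' hj' => by rw [show j' = j from Fin.ext hj']; exact h1))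
        (move_mid hn (j : ℕ) hj2 l)
      set jm : Fin n := (⟨(j : ℕ) - 1, by omega⟩ : Fin n) with hjm
      have hjmval : (jm : ℕ) = (j : ℕ) - 1 := by rw [hjm]
      have hd := hdom jm
      rcases hν with hν | hν
      · have hc := congrFun hν jm
        simp only [Pi.zero_apply] at hc
        split_ifs at hc <;> omega
      · have hc := congrFun hν jm
        simp only [single_coord'] at hc
        split_ifs at hc <;> omega
    have hle1 : ∀ j : Fin n, (j : ℕ) = n - 1 → l j ≤ 1 := by
      intro j hj
      by_contra hgt
      have hν := hmin _ (dom_move_last hn l hdom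
          (fun j' hj' => by rw [show j' = j from Fin.ext (by omega)]; omega))
        (move_last hn l)
      set jm : Fin n := (⟨n - 2, by omega⟩ : Fin n) with hjm
      have hjmval : (jm : ℕ) = n - 2 := by rw [hjm]
      have hd := hdom jm
      rcases hν with hν | hν
      · have hc := congrFun hν jm
        simp only [Pi.zero_apply] at hc
        split_ifs at hc <;> omega
      · have hc := congrFun hν jm
        simp only [single_coord'] at hc
        split_ifs at hc <;> omega
    have hle0 : ∀ j : Fin n, (j : ℕ) = 0 → l j ≤ 1 := by
      intro j hj
      by_contra hgt
      have hν := hmin _ (dom_move_mid hn 0 (by omega) l hdom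
          (fun j' hj' => by rw [show j' = j from Fin.ext (by omega)]; omega))
        (move_mid hn 0 (by omega) l)
      have hd := hdom j
      rcases hν with hν | hν
      · have hc := congrFun hν j
        simp only [Pi.zero_apply] at hc
        split_ifs at hc <;> omega
      · have hc := congrFun hν j
        simp only [single_coord'] at hc
        split_ifs at hc <;> omega
    have hchar : ∀ j : Fin n, l j =
        if (j : ℕ) = 0 then l j0 else if (j : ℕ) = n - 1 then l jn else 0 := by
      intro j
      by_cases ha : (j : ℕ) = 0
      · rw [if_pos ha, show j = j0 from Fin.ext (by omega)]
      · rw [if_neg ha]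
        by_cases hb : (j : ℕ) = n - 1
        · rw [if_pos hb, show j = jn from Fin.ext (by omega)]
        · rw [if_neg hb]
          exact hz j (by omega) (by have := j.isLt; omega)
    have hd0 := hdom j0
    have hdn := hdom jn
    have hb0 := hle0 j0 hj0val
    have hbn := hle1 jn hjnval
    by_cases h00 : l j0 = 0
    · exfalso
      apply hnotc
      by_cases hnn : l jn = 0
      · left
        funext j
        show l j = 0
        rw [hchar j]
        split_ifs <;> omega
      · right
        have h1n : l jn = 1 := by omega
        funext j
        rw [single_coord, hchar j]
        split_ifs <;> omega
    · have h01 : l j0 = 1 := by omega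
      by_cases hnn : l jn = 0
      · left
        funext j
        rw [single_coord, hchar j]
        split_ifs <;> omega
      · right
        have h1n : l jn = 1 := by omega
        funext j
        rw [Pi.add_apply, single_coord, single_coord, hchar j]
        split_ifs <;> omega
  · have hde : dominant n (Pi.single (⟨0, by omega⟩ : Fin n) (1 : ℤ) : Fin n → ℤ) := by
      intro i
      rw [single_coord]
      split_ifs <;> omega
    have hdω : dominant n (Pi.single (⟨n - 1, by omega⟩ : Fin n) (1 : ℤ) : Fin n → ℤ) := by
      intro i
      rw [single_coord]
      split_ifs <;> omega
    rintro (rfl | rfl)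
    · refine ⟨hde, ?_, ?_⟩
      · intro hc
        simp only [Set.mem_insert_iff, Set.mem_singleton_iff] at hc
        rcases hc with hc | hc
        · have h := congrFun hc (⟨0, by omega⟩ : Fin n)
          simp only [single_coord, Fin.val_mk, Pi.zero_apply, if_true] at h
          omega
        · have h := congrFun hc (⟨0, by omega⟩ : Fin n)
          simp only [single_coord, Fin.val_mk] at h
          split_ifs at h <;> omega
      · intro ν hν hp
        have hnu := lower_e hn _ ?_ ?_ ?_ ν hν hp
        · simp only [Set.mem_insert_iff, Set.mem_singleton_iff]
          left
          rw [hnu]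
          funext j
          simp only [Pi.zero_apply, single_coord]
          split_ifs <;> omega
        · intro j hj
          rw [single_coord]
          split_ifs <;> omega
        · intro j hj1 hj2
          rw [single_coord]
          split_ifs <;> omega
        · intro j hj
          rw [single_coord]
          split_ifs <;> omega
    · refine ⟨fun i => by rw [Pi.add_apply]; have := hde i; have := hdω i; omega, ?_, ?_⟩
      · intro hc
        simp only [Set.mem_insert_iff, Set.mem_singleton_iff] at hc
        rcases hc with hc | hc
        · have h := congrFun hc (⟨0, by omega⟩ : Fin n)
          simp only [Pi.add_apply, single_coord, Fin.val_mk, Pi.zero_apply] at h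
          split_ifs at h <;> omega
        · have h := congrFun hc (⟨0, by omega⟩ : Fin n)
          simp only [Pi.add_apply, single_coord, Fin.val_mk] at h
          split_ifs at h <;> omega
      · intro ν hν hp
        have hnu := lower_e hn _ ?_ ?_ ?_ ν hν hp
        · simp only [Set.mem_insert_iff, Set.mem_singleton_iff]
          right
          rw [hnu]
          funext j
          simp only [Pi.add_apply, single_coord]
          split_ifs <;> omega
        · intro j hj
          rw [Pi.add_apply, single_coord, single_coord]
          have := j.isLt
          split_ifs <;> omega
        · intro j hj1 hj2
          rw [Pi.add_apply, single_coord, single_coord]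
          rw [if_neg (by omega), if_neg (by omega)]
          omega
        · intro j hj
          rw [Pi.add_apply, single_coord, single_coord]
          split_ifs <;> omega


lemma lower_e1 (hn : 3 ≤ n) (l : Fin n → ℤ)
    (h0 : ∀ j : Fin n, (j : ℕ) = 0 → l j ≤ 0)
    (h1 : ∀ j : Fin n, (j : ℕ) = 1 → l j ≤ 1)
    (hmid : ∀ j : Fin n, 2 ≤ (j : ℕ) → (j : ℕ) ≤ n - 2 → l j ≤ 0)
    (hlast : ∀ j : Fin n, (j : ℕ) = n - 1 → l j ≤ 0)
    (ν : Fin n → ℤ) (hν : dominant n ν) (hp : prec n ν l) :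
    (ν = fun j => l j - ((if (j : ℕ) = 1 then 1 else 0) - (if (j : ℕ) = 0 then 1 else 0)))
    ∨ (ν = fun j => l j - (if (j : ℕ) = 1 then 1 else 0)) := by
  obtain ⟨hne, c, heq⟩ := hp
  have hA : 2 * F n (fun i => (c i : ℤ)) 1 ≤
      F n (fun i => (c i : ℤ)) 0 + F n (fun i => (c i : ℤ)) 2 := by
    have h := ineq_mid hn (fun i => (c i : ℤ)) ν l heq hν 0 (by omega) 0 h0
    rw [show (0 : ℕ) + 1 = 1 from rfl, show (0 : ℕ) + 2 = 2 from rfl] at h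
    omega
  have hB : 2 * F n (fun i => (c i : ℤ)) 2 ≤
      F n (fun i => (c i : ℤ)) 1 + F n (fun i => (c i : ℤ)) 3 + 1 := by
    have h := ineq_mid hn (fun i => (c i : ℤ)) ν l heq hν 1 (by omega) 1 h1
    rw [show (1 : ℕ) + 1 = 2 from rfl, show (1 : ℕ) + 2 = 3 from rfl] at h
    omega
  have hC : ∀ j, 3 ≤ j → j ≤ n - 1 →
      2 * F n (fun i => (c i : ℤ)) j ≤
        F n (fun i => (c i : ℤ)) (j - 1) + F n (fun i => (c i : ℤ)) (j + 1) := by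
    intro j hj1 hj2
    have h := ineq_mid hn (fun i => (c i : ℤ)) ν l heq hν (j - 1) (by omega) 0
      (fun jf hjf => hmid jf (by omega) (by omega))
    rw [show j - 1 + 1 = j by omega, show j - 1 + 2 = j + 1 by omega] at h
    omega
  have hD : 2 * F n (fun i => (c i : ℤ)) n ≤ 2 * F n (fun i => (c i : ℤ)) (n - 1) := by
    have h := ineq_last hn (fun i => (c i : ℤ)) ν l heq hν 0 hlast
    omega
  rcases L2 hn (F n (fun i => (c i : ℤ))) rfl (F_nonneg c) hA hB hC hD with
    hz | ⟨hf1, ho⟩ | ⟨hf1, ho⟩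
  · exact absurd (nu_eq_l ν l c heq hz) hne
  · left
    have hc2 : ∀ i : Fin n, (c i : ℤ) = if (i : ℕ) = 0 then 0 else 1 := by
      intro i
      by_cases h : (i : ℕ) = 0
      · rw [if_pos h]
        have hF := F_fin (fun i => (c i : ℤ)) i
        rw [h] at hF
        rw [← hF]
        exact hf1
      · rw [if_neg h]
        have hval := ho ((i : ℕ) + 1) (by omega) (by have := i.isLt; omega)
        rw [F_fin] at hval
        exact hval
    funext j
    show ν j = l j - ((if (j : ℕ) = 1 then 1 else 0) - (if (j : ℕ) = 0 then 1 else 0))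
    have h := congrFun heq j
    rw [Pi.add_apply, sumE2 hn _ hc2 j] at h
    split_ifs at h ⊢ <;> omega
  · right
    have hc2 : ∀ i : Fin n, (c i : ℤ) = if (i : ℕ) = 0 then 1 else 2 := by
      intro i
      by_cases h : (i : ℕ) = 0
      · rw [if_pos h]
        have hF := F_fin (fun i => (c i : ℤ)) i
        rw [h] at hF
        rw [← hF]
        exact hf1
      · rw [if_neg h]
        have hval := ho ((i : ℕ) + 1) (by omega) (by have := i.isLt; omega)
        rw [F_fin] at hval
        exact hval
    funext j
    show ν j = l j - (if (j : ℕ) = 1 then 1 else 0)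
    have h := congrFun heq j
    rw [Pi.add_apply, sumE3 hn _ hc2 j] at h
    split_ifs at h ⊢ <;> omega

lemma radical_last_even (hn : 3 ≤ n) (l : Fin n → ℤ) (hrad : radical n l)
    (j : Fin n) (hj : (j : ℕ) = n - 1) : ∃ m : ℤ, l j = 2 * m := by
  obtain ⟨cz, heq⟩ := hrad
  have h := congrFun heq j
  rw [sum_smul_alpha_apply hn, if_pos hj] at h
  exact ⟨F n cz n - F n cz (n - 1), by omega⟩


set_option maxHeartbeats 2000000 in
lemma part3 (hn : 3 ≤ n) :
    {l | l ∈ level n 3 ∧ radical n l} =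
      {(Pi.single (⟨1, (Nat.lt_of_lt_of_le (by norm_num) hn)⟩ : Fin n) (1 : ℤ) : Fin n → ℤ)} := by
  have hmem2 : ∀ x : Fin n → ℤ, x ∈ cum n 2 ↔
      ((x = 0 ∨ x = (Pi.single (⟨n - 1, by omega⟩ : Fin n) (1 : ℤ) : Fin n → ℤ)) ∨
       (x = (Pi.single (⟨0, by omega⟩ : Fin n) (1 : ℤ) : Fin n → ℤ) ∨
        x = (Pi.single (⟨0, by omega⟩ : Fin n) (1 : ℤ) : Fin n → ℤ) +
          Pi.single (⟨n - 1, by omega⟩ : Fin n) (1 : ℤ))) := by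
    intro x
    rw [cum_two, Set.mem_union, cum_one.trans (part1 hn), part2 hn]
    simp only [Set.mem_insert_iff, Set.mem_singleton_iff]
  ext l
  simp only [Set.mem_setOf_eq, Set.mem_singleton_iff]
  constructor
  · rintro ⟨⟨hdom, hnotc, hmin⟩, hrad⟩
    have hnotc2 : l ∉ cum n 2 := hnotc
    have hmin2 : ∀ ν, dominant n ν → prec n ν l → ν ∈ cum n 2 := hmin
    have hz2 : ∀ j : Fin n, 2 ≤ (j : ℕ) → (j : ℕ) ≤ n - 2 → l j = 0 := by
      intro j hj1 hj2
      by_contra hne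
      have h1 : 1 ≤ l j := by have := hdom j; omega
      have hν := hmin2 _ (dom_move_mid hn (j : ℕ) hj2 l hdom
          (fun j' hj' => by rw [show j' = j from Fin.ext hj']; exact h1))
        (move_mid hn (j : ℕ) hj2 l)
      set jm : Fin n := (⟨(j : ℕ) - 1, by omega⟩ : Fin n) with hjm
      have hjmval : (jm : ℕ) = (j : ℕ) - 1 := by rw [hjm]
      have hd := hdom jm
      rcases (hmem2 _).mp hν with (hc | hc) | (hc | hc) <;>
        have hcc := congrFun hc jm <;>
        simp only [Pi.zero_apply, Pi.add_apply, single_coord', Fin.val_mk] at hcc <;>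
        split_ifs at hcc <;> first | contradiction | omega
    have hle1 : ∀ j : Fin n, (j : ℕ) = n - 1 → l j ≤ 1 := by
      intro j hj
      by_contra hgt
      have hν := hmin2 _ (dom_move_last hn l hdom
          (fun j' hj' => by rw [show j' = j from Fin.ext (by omega)]; omega))
        (move_last hn l)
      set jm : Fin n := (⟨n - 2, by omega⟩ : Fin n) with hjm
      have hjmval : (jm : ℕ) = n - 2 := by rw [hjm]
      have hd := hdom jm
      rcases (hmem2 _).mp hν with (hc | hc) | (hc | hc) <;>
        have hcc := congrFun hc jm <;>
        simp only [Pi.zero_apply, Pi.add_apply, single_coord', Fin.val_mk] at hcc <;>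
        split_ifs at hcc <;> first | contradiction | omega
    have hle0 : ∀ j : Fin n, (j : ℕ) = 0 → l j ≤ 1 := by
      intro j hj
      by_contra hgt
      have hν := hmin2 _ (dom_move_alpha0 hn l hdom
          (fun j' hj' => by rw [show j' = j from Fin.ext (by omega)]; omega))
        (move_alpha0 hn l)
      set jm : Fin n := (⟨1, by omega⟩ : Fin n) with hjm
      have hjmval : (jm : ℕ) = 1 := by rw [hjm]
      have hd := hdom jm
      rcases (hmem2 _).mp hν with (hc | hc) | (hc | hc) <;>
        have hcc := congrFun hc jm <;>
        simp only [Pi.zero_apply, Pi.add_apply, single_coord', Fin.val_mk] at hcc <;>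
        split_ifs at hcc <;> first | contradiction | omega
    set j0 : Fin n := (⟨0, by omega⟩ : Fin n) with hj0d
    have hj0val : (j0 : ℕ) = 0 := by rw [hj0d]
    set j1 : Fin n := (⟨1, by omega⟩ : Fin n) with hj1d
    have hj1val : (j1 : ℕ) = 1 := by rw [hj1d]
    set jn : Fin n := (⟨n - 1, by omega⟩ : Fin n) with hjnd
    have hjnval : (jn : ℕ) = n - 1 := by rw [hjnd]
    have hd0 := hdom j0
    have hd1 := hdom j1
    have hdn := hdom jn
    have hb0 := hle0 j0 hj0val
    have hbn := hle1 jn hjnval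
    have h00 : l j0 = 0 := by
      by_contra h01
      have hν := hmin2 _ (dom_move_mid hn 0 (by omega) l hdom
          (fun j' hj' => by rw [show j' = j0 from Fin.ext (by omega)]; omega))
        (move_mid hn 0 (by omega) l)
      rcases (hmem2 _).mp hν with (hc | hc) | (hc | hc)
      · apply hnotc2
        apply (hmem2 l).mpr
        right; left
        funext j
        have hcc := congrFun hc j
        simp only [Pi.zero_apply] at hcc
        simp only [single_coord', Fin.val_mk]
        split_ifs at hcc ⊢ <;> first | contradiction | omega
      · apply hnotc2
        apply (hmem2 l).mpr
        right; right
        funext j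
        have hcc := congrFun hc j
        simp only [single_coord', Fin.val_mk] at hcc
        simp only [Pi.add_apply, single_coord', Fin.val_mk]
        split_ifs at hcc ⊢ <;> first | contradiction | omega
      · have hcc := congrFun hc j0
        simp only [single_coord', Fin.val_mk] at hcc
        split_ifs at hcc <;> first | contradiction | omega
      · have hcc := congrFun hc j0
        simp only [Pi.add_apply, single_coord', Fin.val_mk] at hcc
        split_ifs at hcc <;> first | contradiction | omega
    by_cases h10 : l j1 = 0
    · exfalso
      apply hnotc2
      apply (hmem2 l).mpr
      left
      have hchar : ∀ j : Fin n, l j = if (j : ℕ) = n - 1 then l jn else 0 := by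
        intro j
        by_cases ha : (j : ℕ) = n - 1
        · rw [if_pos ha, show j = jn from Fin.ext (by omega)]
        · rw [if_neg ha]
          by_cases hb : (j : ℕ) = 0
          · rw [show j = j0 from Fin.ext (by omega)]; exact h00
          · by_cases hcl : (j : ℕ) = 1
            · rw [show j = j1 from Fin.ext (by omega)]; exact h10
            · exact hz2 j (by omega) (by have := j.isLt; omega)
      by_cases hnn : l jn = 0
      · left
        funext j
        simp only [Pi.zero_apply]
        rw [hchar j]
        split_ifs <;> omega
      · right
        have h1n : l jn = 1 := by omega
        funext j
        simp only [single_coord', Fin.val_mk]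
        rw [hchar j]
        split_ifs <;> omega
    · have h11 : 1 ≤ l j1 := by omega
      have hν := hmin2 _ (dom_move_mid hn 1 (by omega) l hdom
          (fun j' hj' => by rw [show j' = j1 from Fin.ext (by omega)]; omega))
        (move_mid hn 1 (by omega) l)
      rcases (hmem2 _).mp hν with (hc | hc) | (hc | hc)
      · exfalso
        have hcc := congrFun hc j0
        simp only [Pi.zero_apply] at hcc
        split_ifs at hcc <;> first | contradiction | omega
      · exfalso
        have hcc := congrFun hc j0
        simp only [single_coord', Fin.val_mk] at hcc
        split_ifs at hcc <;> first | contradiction | omega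
      · funext j
        have hcc := congrFun hc j
        simp only [single_coord', Fin.val_mk] at hcc
        simp only [single_coord', Fin.val_mk]
        split_ifs at hcc ⊢ <;> first | contradiction | omega
      · exfalso
        have hcc := congrFun hc jn
        simp only [Pi.add_apply, single_coord', Fin.val_mk] at hcc
        obtain ⟨m, hm⟩ := radical_last_even hn l hrad jn hjnval
        split_ifs at hcc <;> first | contradiction | omega
  · rintro rfl
    constructor
    · refine ⟨?_, ?_, ?_⟩
      · intro i
        rw [single_coord']
        split_ifs <;> omega
      · intro hcm
        have hcm2 : (Pi.single (⟨1, by omega⟩ : Fin n) (1 : ℤ) : Fin n → ℤ) ∈ cum n 2 := hcm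
        rcases (hmem2 _).mp hcm2 with (hc | hc) | (hc | hc) <;>
          have hcc := congrFun hc (⟨1, by omega⟩ : Fin n) <;>
          simp only [Pi.zero_apply, Pi.add_apply, single_coord', Fin.val_mk] at hcc <;>
          first
          | (split_ifs at hcc <;> first | contradiction | omega)
          | omega
      · intro ν hν hp
        have hlow := lower_e1 hn _ ?_ ?_ ?_ ?_ ν hν hp
        · show ν ∈ cum n 2
          apply (hmem2 _).mpr
          rcases hlow with hnu | hnu
          · right; left
            rw [hnu]
            funext j
            simp only [single_coord', Fin.val_mk]
            split_ifs <;> first | contradiction | omega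
          · left; left
            rw [hnu]
            funext j
            simp only [Pi.zero_apply, single_coord', Fin.val_mk]
            split_ifs <;> first | contradiction | omega
        · intro j hj
          simp only [single_coord', Fin.val_mk]
          split_ifs <;> first | contradiction | omega
        · intro j hj
          simp only [single_coord', Fin.val_mk]
          split_ifs <;> first | contradiction | omega
        · intro j hj1 hj2
          simp only [single_coord', Fin.val_mk]
          split_ifs <;> first | contradiction | omega
        · intro j hj
          simp only [single_coord', Fin.val_mk]
          split_ifs <;> first | contradiction | omega
    · refine ⟨fun i => if (i : ℕ) = 0 then 1 else 2, ?_⟩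
      funext j
      rw [single_coord', sumE3 hn _ (fun i => rfl) j]

end Aux

/-- **Lemma 5.2, row `B_n`, and Lemma 5.2(1).** In type `B_n` (`n ≥ 3`):
`Λ₁ = {0, ω_n}`, `Λ₂ = {ω_1, ω_1 + ω_n}`, and `ω_2` is the unique radical weight in `Λ₃`. -/
theorem levels_Bn (n : ℕ) (hn : 3 ≤ n) :
    level n 1 = {0, Pi.single (⟨n - 1, by omega⟩ : Fin n) (1 : ℤ)} ∧
    level n 2 =
      {Pi.single (⟨0, by omega⟩ : Fin n) (1 : ℤ),
       Pi.single (⟨0, by omega⟩ : Fin n) (1 : ℤ) +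
         Pi.single (⟨n - 1, by omega⟩ : Fin n) (1 : ℤ)} ∧
    {l | l ∈ level n 3 ∧ radical n l} = {Pi.single (⟨1, by omega⟩ : Fin n) (1 : ℤ)} := by
  exact ⟨part1 hn, part2 hn, part3 hn⟩

end WeightLevelsBn
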